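/- With the rerooting operators J^(θ) on 𝕋 defined by J^(θ)(f,ζ) = (f^[θ], ζ^(θ)) (as in the previous statement), for all θ, θ' ∈ [0,1) one has J^(θ) ∘ J^(θ') = J^(θ⊕θ'), where ⊕ is addition mod 1. In particular the operators define a group action of ([0,1), ⊕) on 𝕋. -/

import Mathlib

open Set

/-- Addition modulo 1, for `a = θ + x` with `θ ∈ [0,1)` and `x ∈ [0,1]`. -/
noncomputable def wrap (a : ℝ) : ℝ := if a < 1 then a else a - 1

/-- `ζ̌(x,y) = min{ζ(u) : u ∈ [x∧y, x∨y]}`. -/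
noncomputable def snakeMinOn (ζ : ℝ → ℝ) (x y : ℝ) : ℝ := sInf (ζ '' Set.uIcc x y)

/-- The space `𝕋` of snake tours. -/
def MemSnakeSpace (f ζ : ℝ → ℝ) : Prop :=
  ContinuousOn f (Set.Icc 0 1) ∧ ContinuousOn ζ (Set.Icc 0 1) ∧
  ζ 0 = 0 ∧ ζ 1 = 0 ∧ (∀ x ∈ Set.Icc (0:ℝ) 1, 0 ≤ ζ x) ∧
  f 0 = 0 ∧ f 1 = 0 ∧
  ∀ s ∈ Set.Icc (0:ℝ) 1, ∀ s' ∈ Set.Icc (0:ℝ) 1,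
    ζ s = ζ s' → ζ s = snakeMinOn ζ s s' → f s = f s'

/-- `f^[θ](x) = f(θ⊕x) - f(θ)`. -/
noncomputable def rerootF (f : ℝ → ℝ) (θ : ℝ) : ℝ → ℝ :=
  fun x => f (wrap (θ + x)) - f θ

/-- `ζ^(θ)(x) = ζ(θ⊕x) + ζ(θ) - 2ζ̌(θ⊕x, θ)`. -/
noncomputable def rerootZ (ζ : ℝ → ℝ) (θ : ℝ) : ℝ → ℝ :=
  fun x => ζ (wrap (θ + x)) + ζ θ - 2 * snakeMinOn ζ (wrap (θ + x)) θ

/-! ### Auxiliary lemmas -/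

lemma wrap_comp {θ θ' x : ℝ} (hθ : θ ∈ Set.Ico (0:ℝ) 1) (hθ' : θ' ∈ Set.Ico (0:ℝ) 1)
    (hx : x ∈ Set.Icc (0:ℝ) 1) :
    wrap (θ' + wrap (θ + x)) = wrap (wrap (θ + θ') + x) := by
  obtain ⟨h1, h2⟩ := hθ; obtain ⟨h3, h4⟩ := hθ'; obtain ⟨h5, h6⟩ := hx
  simp only [wrap]
  split_ifs <;> linarith

lemma wrap_mem {θ x : ℝ} (hθ : θ ∈ Set.Ico (0:ℝ) 1) (hx : x ∈ Set.Icc (0:ℝ) 1) :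
    wrap (θ + x) ∈ Set.Ico (0:ℝ) 1 := by
  obtain ⟨h1, h2⟩ := hθ; obtain ⟨h5, h6⟩ := hx
  simp only [wrap]
  split_ifs with h <;> constructor <;> linarith

lemma minOn_comm (ζ : ℝ → ℝ) (x y : ℝ) : snakeMinOn ζ x y = snakeMinOn ζ y x := by
  rw [snakeMinOn, snakeMinOn, uIcc_comm]

lemma minOn_le {ζ : ℝ → ℝ} {x y v : ℝ} (hxy : x ≤ y)
    (hcont : ContinuousOn ζ (Icc x y)) (hv : v ∈ Icc x y) :
    snakeMinOn ζ x y ≤ ζ v := by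
  rw [snakeMinOn, uIcc_of_le hxy]
  exact csInf_le (isCompact_Icc.image_of_continuousOn hcont).bddBelow ⟨v, hv, rfl⟩

lemma minOn_mem {ζ : ℝ → ℝ} {x y : ℝ} (hxy : x ≤ y)
    (hcont : ContinuousOn ζ (Icc x y)) :
    ∃ w ∈ Icc x y, ζ w = snakeMinOn ζ x y := by
  rw [snakeMinOn, uIcc_of_le hxy]
  have := (isCompact_Icc.image_of_continuousOn hcont).sInf_mem
    ((nonempty_Icc.2 hxy).image ζ)
  obtain ⟨w, hw, hweq⟩ := this
  exact ⟨w, hw, hweq⟩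

lemma le_minOn {ζ : ℝ → ℝ} {x y r : ℝ} (hxy : x ≤ y)
    (hr : ∀ t ∈ Icc x y, r ≤ ζ t) : r ≤ snakeMinOn ζ x y := by
  rw [snakeMinOn, uIcc_of_le hxy]
  exact le_csInf ((nonempty_Icc.2 hxy).image ζ) (by rintro _ ⟨t, ht, rfl⟩; exact hr t ht)

lemma minOn_split {ζ : ℝ → ℝ} {x y z : ℝ} (hxy : x ≤ y) (hyz : y ≤ z)
    (hcont : ContinuousOn ζ (Icc x z)) :
    snakeMinOn ζ x z = min (snakeMinOn ζ x y) (snakeMinOn ζ y z) := by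
  have hxz : x ≤ z := hxy.trans hyz
  have h1 : Icc x y ⊆ Icc x z := Icc_subset_Icc le_rfl hyz
  have h2 : Icc y z ⊆ Icc x z := Icc_subset_Icc hxy le_rfl
  rw [snakeMinOn, snakeMinOn, snakeMinOn, uIcc_of_le hxy, uIcc_of_le hyz, uIcc_of_le hxz,
    ← Icc_union_Icc_eq_Icc hxy hyz, image_union]
  exact csInf_union
    (isCompact_Icc.image_of_continuousOn (hcont.mono h1)).bddBelow
    ((nonempty_Icc.2 hxy).image ζ)
    (isCompact_Icc.image_of_continuousOn (hcont.mono h2)).bddBelow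
    ((nonempty_Icc.2 hyz).image ζ)

lemma minOn_mono {ζ : ℝ → ℝ} {x y z : ℝ} (hxy : x ≤ y) (hyz : y ≤ z)
    (hcont : ContinuousOn ζ (Icc x z)) :
    snakeMinOn ζ x z ≤ snakeMinOn ζ x y := by
  rw [snakeMinOn, snakeMinOn, uIcc_of_le hxy, uIcc_of_le (hxy.trans hyz)]
  exact csInf_le_csInf (isCompact_Icc.image_of_continuousOn hcont).bddBelow
    ((nonempty_Icc.2 hxy).image ζ)
    (image_mono (Icc_subset_Icc le_rfl hyz))

lemma isLeast_union {s t : Set ℝ} {x y : ℝ} (hs : IsLeast s x) (ht : IsLeast t y) :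
    IsLeast (s ∪ t) (min x y) := by
  constructor
  · rcases le_total x y with h | h
    · rw [min_eq_left h]; exact Or.inl hs.1
    · rw [min_eq_right h]; exact Or.inr ht.1
  · rintro z (hz | hz)
    · exact (min_le_left _ _).trans (hs.2 hz)
    · exact (min_le_right _ _).trans (ht.2 hz)

/-- Key inf identity, on the right side of the root `c`. -/
lemma star_right {ζ : ℝ → ℝ} {c A B : ℝ} (hcA : c ≤ A) (hAB : A ≤ B)
    (hcont : ContinuousOn ζ (Icc c B)) :
    IsLeast ((fun v => ζ v + ζ c - 2 * snakeMinOn ζ c v) '' Icc A B)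
      (ζ c + snakeMinOn ζ A B - snakeMinOn ζ c A - snakeMinOn ζ c B) := by
  have hcB : c ≤ B := hcA.trans hAB
  set p := snakeMinOn ζ c A with hp
  set q := snakeMinOn ζ A B with hq
  have hcontAB : ContinuousOn ζ (Icc A B) := hcont.mono (Icc_subset_Icc hcA le_rfl)
  have hsplitB : snakeMinOn ζ c B = min p q := minOn_split hcA hAB hcont
  have hsplit : ∀ v ∈ Icc A B, snakeMinOn ζ c v = min p (snakeMinOn ζ A v) := fun v hv =>
    minOn_split hcA hv.1 (hcont.mono (Icc_subset_Icc le_rfl hv.2))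
  have hζA : p ≤ ζ A := minOn_le hcA (hcont.mono (Icc_subset_Icc le_rfl hAB))
    (right_mem_Icc.2 hcA)
  constructor
  · -- membership
    rcases le_total p q with hpq | hqp
    · obtain ⟨w, hw, hζw⟩ := minOn_mem hAB hcontAB
      refine ⟨w, hw, ?_⟩
      have h1 : snakeMinOn ζ c w = p ⊓ snakeMinOn ζ A w := hsplit w hw
      have h2 : q ≤ snakeMinOn ζ A w := minOn_mono hw.1 hw.2 hcontAB
      have h3 : p ⊓ snakeMinOn ζ A w = p := inf_eq_left.2 (hpq.trans h2)
      dsimp only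
      rw [hsplitB, inf_eq_left.2 hpq, h1, h3, hζw, ← hq]
      ring
    · -- q ≤ p : IVT argument
      obtain ⟨w, hw, hζw⟩ := minOn_mem hAB hcontAB
      have hcontAw : ContinuousOn ζ (Icc A w) :=
        hcontAB.mono (Icc_subset_Icc le_rfl hw.2)
      have hmem : p ∈ Icc (ζ w) (ζ A) := ⟨by rw [hζw]; exact hqp, hζA⟩
      have hTne : ∃ t ∈ Icc A w, ζ t = p := by
        obtain ⟨t, ht, hteq⟩ := intermediate_value_Icc' hw.1 hcontAw hmem
        exact ⟨t, ht, hteq⟩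
      set T : Set ℝ := Icc A w ∩ ζ ⁻¹' {p} with hT
      have hTclosed : IsClosed T :=
        hcontAw.preimage_isClosed_of_isClosed isClosed_Icc isClosed_singleton
      have hTne' : T.Nonempty := by
        obtain ⟨t, ht, hteq⟩ := hTne; exact ⟨t, ht, hteq⟩
      have hTbdd : BddBelow T := ⟨A, fun t ht => ht.1.1⟩
      set v := sInf T with hv
      have hvT : v ∈ T := hTclosed.csInf_mem hTne' hTbdd
      have hvA : A ≤ v := hvT.1.1
      have hvw : v ≤ w := hvT.1.2
      have hζv : ζ v = p := hvT.2
      have hge : ∀ t ∈ Icc A v, p ≤ ζ t := by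
        intro t ht
        by_contra hlt
        push_neg at hlt
        have hcontAt : ContinuousOn ζ (Icc A t) :=
          hcontAw.mono (Icc_subset_Icc le_rfl (ht.2.trans hvw))
        obtain ⟨s, hs, hseq⟩ := intermediate_value_Icc' ht.1 hcontAt ⟨hlt.le, hζA⟩
        have hsT : s ∈ T := ⟨⟨hs.1, hs.2.trans (ht.2.trans hvw)⟩, hseq⟩
        have : v ≤ s := csInf_le hTbdd hsT
        have : ζ t < p := hlt
        have hst : s ≤ t := hs.2
        have htv : t ≤ v := ht.2
        -- v ≤ s ≤ t ≤ v, so s = t = v, but ζ v = p contradicts ζ t < p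
        have hveq : t = v := le_antisymm htv (‹v ≤ s›.trans hst)
        rw [hveq, hζv] at hlt
        exact lt_irrefl _ hlt
      refine ⟨v, ⟨hvA, hvw.trans hw.2⟩, ?_⟩
      have h1 : snakeMinOn ζ c v = p ⊓ snakeMinOn ζ A v := hsplit v ⟨hvA, hvw.trans hw.2⟩
      have h2 : p ≤ snakeMinOn ζ A v := le_minOn hvA hge
      dsimp only
      rw [h1, inf_eq_left.2 h2, hζv, hsplitB, inf_eq_right.2 hqp]
      ring
  · -- lower bound
    rintro _ ⟨v, hv, rfl⟩
    have h1 : snakeMinOn ζ c v = p ⊓ snakeMinOn ζ A v := hsplit v hv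
    set r := snakeMinOn ζ A v with hr
    have h2 : q ≤ r := minOn_mono hv.1 hv.2 hcontAB
    have h3 : r ≤ ζ v := minOn_le hv.1
      (hcontAB.mono (Icc_subset_Icc le_rfl hv.2)) (right_mem_Icc.2 hv.1)
    dsimp only
    rw [hsplitB, h1]
    rcases le_total p r with h4 | h4 <;> rcases le_total p q with h5 | h5
    · rw [inf_eq_left.2 h4, inf_eq_left.2 h5]; linarith
    · rw [inf_eq_left.2 h4, inf_eq_right.2 h5]; linarith
    · rw [inf_eq_right.2 h4, inf_eq_left.2 h5]; linarith
    · rw [inf_eq_right.2 h4, inf_eq_right.2 h5]; linarith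

/-- Key inf identity, on the left side of the root `c`, by reflection. -/
lemma star_left {ζ : ℝ → ℝ} {c A B : ℝ} (hAB : A ≤ B) (hBc : B ≤ c)
    (hcont : ContinuousOn ζ (Icc A c)) :
    IsLeast ((fun v => ζ v + ζ c - 2 * snakeMinOn ζ v c) '' Icc A B)
      (ζ c + snakeMinOn ζ A B - snakeMinOn ζ A c - snakeMinOn ζ B c) := by
  have hneg : ∀ x y : ℝ, snakeMinOn (fun t => ζ (-t)) x y = snakeMinOn ζ (-x) (-y) := by
    intro x y
    rw [snakeMinOn, snakeMinOn]
    congr 1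
    rw [show ((fun t => ζ (-t)) '' uIcc x y) = ζ '' ((fun t => -t) '' uIcc x y) by
      rw [← image_comp]; rfl]
    congr 1
    simp
  have hcont' : ContinuousOn (fun t => ζ (-t)) (Icc (-c) (-A)) := by
    refine ContinuousOn.comp hcont continuous_neg.continuousOn ?_
    intro t ht
    simp only [mem_Icc] at ht ⊢
    constructor <;> linarith [ht.1, ht.2]
  have key := star_right (ζ := fun t => ζ (-t)) (c := -c) (A := -B) (B := -A)
    (by linarith) (by linarith) hcont'
  simp only [hneg, neg_neg] at key
  have h2 : ((fun v => ζ v + ζ c - 2 * snakeMinOn ζ v c) '' Icc A B) =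
      ((fun a => ζ (-a) + ζ c - 2 * snakeMinOn ζ c (-a)) '' Icc (-B) (-A)) := by
    rw [show Icc A B = (fun v : ℝ => -v) '' Icc (-B) (-A) by simp, ← image_comp]
    apply image_congr
    intro v _
    simp only [Function.comp_apply]
    rw [minOn_comm]
  rw [h2, show ζ c + snakeMinOn ζ A B - snakeMinOn ζ A c - snakeMinOn ζ B c =
      ζ c + snakeMinOn ζ B A - snakeMinOn ζ c B - snakeMinOn ζ c A by
    rw [minOn_comm ζ A B, minOn_comm ζ A c, minOn_comm ζ B c]; ring]
  exact key

section Star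

variable {ζ : ℝ → ℝ} (hcont : ContinuousOn ζ (Icc 0 1)) (h0 : ζ 0 = 0) (h1 : ζ 1 = 0)
  (hpos : ∀ t ∈ Icc (0:ℝ) 1, 0 ≤ ζ t)

include hcont h0 h1 hpos

lemma minOn_zero_left {t : ℝ} (ht : t ∈ Icc (0:ℝ) 1) : snakeMinOn ζ 0 t = 0 := by
  refine le_antisymm ?_ (le_minOn ht.1 (fun s hs => hpos s ⟨hs.1, hs.2.trans ht.2⟩))
  have : snakeMinOn ζ 0 t ≤ ζ 0 := minOn_le ht.1
    (hcont.mono (Icc_subset_Icc le_rfl ht.2)) (left_mem_Icc.2 ht.1)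
  rw [h0] at this; exact this

lemma minOn_one_right {t : ℝ} (ht : t ∈ Icc (0:ℝ) 1) : snakeMinOn ζ t 1 = 0 := by
  refine le_antisymm ?_ (le_minOn ht.2 (fun s hs => hpos s ⟨ht.1.trans hs.1, hs.2⟩))
  have : snakeMinOn ζ t 1 ≤ ζ 1 := minOn_le ht.2
    (hcont.mono (Icc_subset_Icc ht.1 le_rfl)) (right_mem_Icc.2 ht.2)
  rw [h1] at this; exact this

/-- The main identity: the inf of the rerooted excursion over an interval. -/
lemma star_le {c a b : ℝ} (hc : c ∈ Ico (0:ℝ) 1) (ha : a ∈ Ico (0:ℝ) 1)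
    (hb : b ∈ Ico (0:ℝ) 1) (hab : a ≤ b) :
    IsLeast ((rerootZ ζ c) '' Icc a b)
      (ζ c + snakeMinOn ζ (wrap (c + a)) (wrap (c + b)) - snakeMinOn ζ (wrap (c + a)) c
        - snakeMinOn ζ (wrap (c + b)) c) := by
  obtain ⟨hc0, hc1⟩ := hc
  obtain ⟨ha0, ha1⟩ := ha
  obtain ⟨hb0, hb1⟩ := hb
  rcases lt_or_ge (c + b) 1 with hB | hB
  · -- Case A: no wrap
    have hwa : wrap (c + a) = c + a := if_pos (by linarith)
    have hwb : wrap (c + b) = c + b := if_pos hB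
    have himg : (rerootZ ζ c) '' Icc a b =
        (fun v => ζ v + ζ c - 2 * snakeMinOn ζ c v) '' Icc (c + a) (c + b) := by
      rw [← image_const_add_Icc c a b, ← image_comp]
      apply image_congr
      intro u hu
      simp only [Function.comp, rerootZ]
      have hw : wrap (c + u) = c + u := if_pos (by linarith [hu.2])
      rw [hw, minOn_comm]
    rw [himg, hwa, hwb]
    have key := star_right (ζ := ζ) (c := c) (A := c + a) (B := c + b)
      (by linarith) (by linarith) (hcont.mono (Icc_subset_Icc hc0 (by linarith)))
    rw [minOn_comm ζ (c + a) c, minOn_comm ζ (c + b) c]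
    exact key
  · rcases le_or_gt 1 (c + a) with hA | hA
    · -- Case B: everything wraps
      have hwa : wrap (c + a) = c + a - 1 := if_neg (by linarith)
      have hwb : wrap (c + b) = c + b - 1 := if_neg (by linarith)
      have himg : (rerootZ ζ c) '' Icc a b =
          (fun v => ζ v + ζ c - 2 * snakeMinOn ζ v c) '' Icc (c + a - 1) (c + b - 1) := by
        rw [show Icc (c + a - 1) (c + b - 1) = (fun u => (c - 1) + u) '' Icc a b by
          rw [image_const_add_Icc]; congr 1 <;> ring, ← image_comp]
        apply image_congr
        intro u hu
        simp only [Function.comp, rerootZ]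
        have hw : wrap (c + u) = (c - 1) + u := by
          rw [wrap, if_neg (by linarith [hu.1])]; ring
        rw [hw]
      rw [himg, hwa, hwb]
      exact star_left (ζ := ζ) (c := c) (A := c + a - 1) (B := c + b - 1)
        (by linarith) (by linarith)
        (hcont.mono (Icc_subset_Icc (by linarith) (by linarith)))
    · -- Case C: wrap point inside
      have hwa : wrap (c + a) = c + a := if_pos hA
      have hwb : wrap (c + b) = c + b - 1 := if_neg (by linarith)
      have hu0a : a ≤ 1 - c := by linarith
      have hu0b : 1 - c ≤ b := by linarith
      have hsplitI : Icc a b = Icc a (1 - c) ∪ Icc (1 - c) b :=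
        (Icc_union_Icc_eq_Icc hu0a hu0b).symm
      -- piece 1
      have himg1 : (rerootZ ζ c) '' Icc a (1 - c) =
          (fun v => ζ v + ζ c - 2 * snakeMinOn ζ c v) '' Icc (c + a) 1 := by
        rw [show Icc (c + a) (1:ℝ) = (fun u => c + u) '' Icc a (1 - c) by
          rw [image_const_add_Icc]; congr 1; ring, ← image_comp]
        apply image_congr
        intro u hu
        simp only [Function.comp, rerootZ]
        rcases lt_or_ge (c + u) 1 with hcu | hcu
        · rw [wrap, if_pos hcu, minOn_comm]
        · have hcu1 : c + u = 1 := le_antisymm (by linarith [hu.2]) hcu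
          rw [wrap, if_neg (not_lt.2 hcu), hcu1]
          rw [show (1:ℝ) - 1 = 0 by ring, h0, h1,
            minOn_zero_left hcont h0 h1 hpos ⟨hc0, hc1.le⟩,
            minOn_one_right hcont h0 h1 hpos ⟨hc0, hc1.le⟩]
      have key1 := star_right (ζ := ζ) (c := c) (A := c + a) (B := 1)
        (by linarith) hA.le (hcont.mono (Icc_subset_Icc hc0 le_rfl))
      rw [minOn_one_right hcont h0 h1 hpos ⟨by linarith, hA.le⟩,
        minOn_one_right hcont h0 h1 hpos ⟨hc0, hc1.le⟩] at key1
      -- key1 : IsLeast _ (ζ c + 0 - snakeMinOn ζ c (c+a) - 0)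
      -- piece 2
      have himg2 : (rerootZ ζ c) '' Icc (1 - c) b =
          (fun v => ζ v + ζ c - 2 * snakeMinOn ζ v c) '' Icc 0 (c + b - 1) := by
        rw [show Icc (0:ℝ) (c + b - 1) = (fun u => (c - 1) + u) '' Icc (1 - c) b by
          rw [image_const_add_Icc]; congr 1 <;> ring, ← image_comp]
        apply image_congr
        intro u hu
        simp only [Function.comp, rerootZ]
        have hw : wrap (c + u) = (c - 1) + u := by
          rw [wrap, if_neg (by push_neg; linarith [hu.1])]; ring
        rw [hw]
      have key2 := star_left (ζ := ζ) (c := c) (A := (0:ℝ)) (B := c + b - 1)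
        (by linarith) (by linarith) (hcont.mono (Icc_subset_Icc le_rfl hc1.le))
      rw [minOn_zero_left hcont h0 h1 hpos (⟨by linarith, by linarith⟩ : c + b - 1 ∈ Icc (0:ℝ) 1),
        minOn_zero_left hcont h0 h1 hpos (⟨hc0, hc1.le⟩ : c ∈ Icc (0:ℝ) 1)] at key2
      -- key2 : IsLeast _ (ζ c + 0 - 0 - snakeMinOn ζ (c + b - 1) c)
      rw [← himg1] at key1
      rw [← himg2] at key2
      have keyU := isLeast_union key1 key2
      rw [← image_union, ← hsplitI] at keyU
      rw [hwa, hwb]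
      set P := snakeMinOn ζ (c + b - 1) c with hP
      set Q := snakeMinOn ζ c (c + a) with hQ
      have hsplitm : snakeMinOn ζ (c + a) (c + b - 1) = P ⊓ Q := by
        rw [minOn_comm ζ (c + a) (c + b - 1)]
        exact minOn_split (by linarith) (by linarith)
          (hcont.mono (Icc_subset_Icc (by linarith) hA.le))
      have heq : min (ζ c + 0 - Q - 0) (ζ c + 0 - 0 - P) =
          ζ c + snakeMinOn ζ (c + a) (c + b - 1) - snakeMinOn ζ (c + a) c - snakeMinOn ζ (c + b - 1) c := by
        rw [hsplitm, minOn_comm ζ (c + a) c, ← hQ, ← hP]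
        rcases le_total P Q with hle | hle
        · rw [min_eq_left (by linarith), inf_eq_left.2 hle]; ring
        · rw [min_eq_right (by linarith), inf_eq_right.2 hle]; ring
      rw [← heq]
      exact keyU
  
end Star

/-- The rerooting operators form a group action of `([0,1), ⊕)` on `𝕋`:
`J^(θ) ∘ J^(θ') = J^(θ⊕θ')`, i.e. rerooting first at `θ'` and then at `θ` is rerooting at
`θ ⊕ θ'` (on `[0,1]`, where the functions are defined). -/
theorem reroot_group_action (f ζ : ℝ → ℝ) (θ θ' : ℝ)
    (hθ : θ ∈ Set.Ico (0:ℝ) 1) (hθ' : θ' ∈ Set.Ico (0:ℝ) 1)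
    (h : MemSnakeSpace f ζ) :
    ∀ x ∈ Set.Icc (0:ℝ) 1,
      rerootF (rerootF f θ') θ x = rerootF f (wrap (θ + θ')) x ∧
      rerootZ (rerootZ ζ θ') θ x = rerootZ ζ (wrap (θ + θ')) x := by
  obtain ⟨hfc, hzc, hz0, hz1, hzpos, hf0, hf1, hsnake⟩ := h
  intro x hx
  constructor
  · simp only [rerootF]
    rw [wrap_comp hθ hθ' hx, add_comm θ' θ]
    ring
  · have star : ∀ a b : ℝ, a ∈ Ico (0:ℝ) 1 → b ∈ Ico (0:ℝ) 1 →
        snakeMinOn (rerootZ ζ θ') a b =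
          ζ θ' + snakeMinOn ζ (wrap (θ' + a)) (wrap (θ' + b)) - snakeMinOn ζ (wrap (θ' + a)) θ'
            - snakeMinOn ζ (wrap (θ' + b)) θ' := by
      intro a b ha hb
      rcases le_total a b with hab | hab
      · have e : snakeMinOn (rerootZ ζ θ') a b = sInf ((rerootZ ζ θ') '' Icc a b) := by
          unfold snakeMinOn; rw [uIcc_of_le hab]
        rw [e, (star_le hzc hz0 hz1 hzpos hθ' ha hb hab).csInf_eq]
      · have e : snakeMinOn (rerootZ ζ θ') a b = sInf ((rerootZ ζ θ') '' Icc b a) := by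
          unfold snakeMinOn; rw [uIcc_comm, uIcc_of_le hab]
        rw [e, (star_le hzc hz0 hz1 hzpos hθ' hb ha hab).csInf_eq,
          minOn_comm ζ (wrap (θ' + b)) (wrap (θ' + a))]
        ring
    show (rerootZ ζ θ') (wrap (θ + x)) + (rerootZ ζ θ') θ
        - 2 * snakeMinOn (rerootZ ζ θ') (wrap (θ + x)) θ = _
    rw [star (wrap (θ + x)) θ (wrap_mem hθ hx) hθ]
    simp only [rerootZ]
    rw [wrap_comp hθ hθ' hx, add_comm θ' θ]
    ring
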